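/- arXiv:2008.05398 — 7 statements merged into one kernel-verified Lean document; each statement's English description precedes it below -/
import Mathlib

section
/- Let r0 be a natural number and let s : ℕ → ℕ satisfy s(0) = 1, s(r) = 2·s(r−1) for 1 ≤ r ≤ r0, s(r) = 2·s(r−1) for r > r0 with r − r0 odd, and s(r) = s(r−1) + 1 for r > r0 with r − r0 even. Then s(r) = 2^r for all r ≤ r0, s(r0 + 2p) = (2^{r0} + 1)·2^p − 1 for all p ≥ 1, and s(r0 + 2p + 1) = (2^{r0} + 1)·2^{p+1} − 2 for all p ≥ 0. -/
/-- Exact solution of the sequence-length recurrence for soft sequence heaps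
    with rank threshold `r0`. -/
theorem soft_sequence_heap_length_exact (r0 : ℕ) (s : ℕ → ℕ)
    (h0 : s 0 = 1)
    (hlow : ∀ r, 1 ≤ r → r ≤ r0 → s r = 2 * s (r - 1))
    (hodd : ∀ r, r0 < r → Odd (r - r0) → s r = 2 * s (r - 1))
    (heven : ∀ r, r0 < r → Even (r - r0) → s r = s (r - 1) + 1) :
    (∀ r, r ≤ r0 → s r = 2 ^ r) ∧
    (∀ p, 1 ≤ p → s (r0 + 2 * p) = (2 ^ r0 + 1) * 2 ^ p - 1) ∧
    (∀ p, s (r0 + 2 * p + 1) = (2 ^ r0 + 1) * 2 ^ (p + 1) - 2) := by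
  have hpow : ∀ r, r ≤ r0 → s r = 2 ^ r := by
    intro r
    induction r with
    | zero => intro _; simpa using h0
    | succ n ih =>
      intro hle
      have h1 := hlow (n + 1) (by omega) hle
      rw [h1, Nat.add_sub_cancel, ih (by omega)]
      ring
  -- key joint induction: odd-index formula, then even follows
  have hB : ∀ p, s (r0 + 2 * p + 1) = (2 ^ r0 + 1) * 2 ^ (p + 1) - 2 ∧
      (1 ≤ p → s (r0 + 2 * p) = (2 ^ r0 + 1) * 2 ^ p - 1) := by
    intro p
    induction p with
    | zero =>
      refine ⟨?_, by omega⟩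
      have h1 := hodd (r0 + 1) (by omega) (by simp)
      rw [h1]
      simp only [Nat.add_sub_cancel]
      rw [hpow r0 le_rfl]
      have : (1:ℕ) ≤ 2 ^ r0 := Nat.one_le_two_pow
      ring_nf
      omega
    | succ n ih =>
      have heq : s (r0 + 2 * (n + 1)) = (2 ^ r0 + 1) * 2 ^ (n + 1) - 1 := by
        have h1 := heven (r0 + 2 * (n + 1)) (by omega) ⟨n + 1, by omega⟩
        have h2 : r0 + 2 * (n + 1) - 1 = r0 + 2 * n + 1 := by omega
        rw [h1, h2, ih.1]
        have : (2:ℕ) ≤ (2 ^ r0 + 1) * 2 ^ (n + 1) :=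
          le_trans (Nat.one_lt_two_pow_iff.mpr (by omega)) (Nat.le_mul_of_pos_left _ (by positivity))
        omega
      refine ⟨?_, fun _ => heq⟩
      have h1 := hodd (r0 + 2 * (n + 1) + 1) (by omega) ⟨n + 1, by omega⟩
      have h2 : r0 + 2 * (n + 1) + 1 - 1 = r0 + 2 * (n + 1) := by omega
      rw [h1, h2, heq]
      have h3 : (2:ℕ) ≤ (2 ^ r0 + 1) * 2 ^ (n + 1) :=
        le_trans (Nat.one_lt_two_pow_iff.mpr (by omega)) (Nat.le_mul_of_pos_left _ (by positivity))
      have h4 : (2 ^ r0 + 1) * 2 ^ (n + 1 + 1) = 2 * ((2 ^ r0 + 1) * 2 ^ (n + 1)) := by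
        ring
      omega
  exact ⟨hpow, fun p hp => (hB p).2 hp, fun p => (hB p).1⟩
end

section
/- Let r0 be a natural number and let s : ℕ → ℕ satisfy s(0) = 1, s(r) = 2·s(r−1) for 1 ≤ r ≤ r0, s(r) = 2·s(r−1) for r > r0 with r − r0 odd, and s(r) = s(r−1) + 1 for r > r0 with r − r0 even. Then s(r) ≤ 2^r for all r ≤ r0 and s(r) ≤ (2^{r0} + 1)·2^{⌈(r−r0)/2⌉} for all r > r0. -/
/-- Lemma 2 of the paper: a rank-`r` sequence of a soft sequence heap with
    rank threshold `r0` has length at most `2 ^ r` for `r ≤ r0`, and at most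
    `(2 ^ r0 + 1) * 2 ^ ⌈(r - r0) / 2⌉` for `r > r0`. -/
theorem soft_sequence_heap_length_bound (r0 : ℕ) (s : ℕ → ℕ)
    (h0 : s 0 = 1)
    (hlow : ∀ r, 1 ≤ r → r ≤ r0 → s r = 2 * s (r - 1))
    (hodd : ∀ r, r0 < r → Odd (r - r0) → s r = 2 * s (r - 1))
    (heven : ∀ r, r0 < r → Even (r - r0) → s r = s (r - 1) + 1) :
    (∀ r, r ≤ r0 → s r ≤ 2 ^ r) ∧
    (∀ r, r0 < r → s r ≤ (2 ^ r0 + 1) * 2 ^ ((r - r0 + 1) / 2)) := by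
  have hpow : ∀ r, r ≤ r0 → s r = 2 ^ r := by
    intro r
    induction r with
    | zero => intro _; simpa using h0
    | succ n ih =>
      intro hle
      rw [hlow (n + 1) (by omega) hle]
      simp [ih (by omega), pow_succ]
      ring
  have key : ∀ k, s (r0 + k) + (if Odd k then 2 else 1) ≤ (2 ^ r0 + 1) * 2 ^ ((k + 1) / 2) := by
    intro k
    induction k with
    | zero => simp [hpow r0 le_rfl]
    | succ n ih =>
      rcases Nat.even_or_odd (n + 1) with he | ho
      · -- n+1 even, so n odd
        obtain ⟨m, hm⟩ := he
        have hm1 : 1 ≤ m := by omega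
        have hsub : r0 + (n + 1) - r0 = n + 1 := by omega
        have hs : s (r0 + (n + 1)) = s (r0 + (n + 1) - 1) + 1 :=
          heven _ (by omega) (by rw [hsub]; exact ⟨m, hm⟩)
        have hidx : r0 + (n + 1) - 1 = r0 + n := by omega
        rw [hidx] at hs
        have hnodd : Odd n := ⟨m - 1, by omega⟩
        rw [if_pos hnodd] at ih
        have he1 : (n + 1 + 1) / 2 = m := by omega
        have he2 : (n + 1) / 2 = m := by omega
        rw [he2] at ih
        rw [he1, hs]
        have : ¬ Odd (n + 1) := by simp [Nat.odd_iff]; omega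
        rw [if_neg this]
        omega
      · -- n+1 odd, so n even
        obtain ⟨m, hm⟩ := ho
        have hsub : r0 + (n + 1) - r0 = n + 1 := by omega
        have hs : s (r0 + (n + 1)) = 2 * s (r0 + (n + 1) - 1) :=
          hodd _ (by omega) (by rw [hsub]; exact ⟨m, hm⟩)
        have hidx : r0 + (n + 1) - 1 = r0 + n := by omega
        rw [hidx] at hs
        have hneven : ¬ Odd n := by simp [Nat.odd_iff]; omega
        rw [if_neg hneven] at ih
        have he1 : (n + 1 + 1) / 2 = m + 1 := by omega
        have he2 : (n + 1) / 2 = m := by omega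
        rw [he2] at ih
        rw [he1, hs, if_pos ⟨m, hm⟩, pow_succ]
        nlinarith [ih]
  constructor
  · intro r hr; exact le_of_eq (hpow r hr)
  · intro r hr
    have h := key (r - r0)
    have : r0 + (r - r0) = r := by omega
    rw [this] at h
    calc s r ≤ s r + (if Odd (r - r0) then 2 else 1) := Nat.le_add_right _ _
      _ ≤ _ := h
end

section
/- Let N ≥ 1 be a natural number, let ε be a real number with 0 < ε < 1, and let r0 = ⌈log₂(1/ε)⌉. Define S : ℕ → ℕ by S(r) = 2^r for r ≤ r0 and S(r) = (2^{r0} + 1)·2^{⌈(r−r0)/2⌉} for r > r0. Then ∑_{r=0}^{⌊log₂ N⌋} S(r) ≤ 32·√(N/ε). -/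
private lemma geom2 (n : ℕ) : ∑ r ∈ Finset.range n, 2 ^ r = 2 ^ n - 1 := by
  induction n with
  | zero => simp
  | succ n ih =>
    rw [Finset.sum_range_succ, ih]
    have h : 1 ≤ 2 ^ n := Nat.one_le_two_pow
    have h2 : 2 ^ (n + 1) = 2 * 2 ^ n := by ring
    omega

private lemma halfsum (m : ℕ) :
    ∑ j ∈ Finset.range m, 2 ^ (j / 2) = 2 ^ (m / 2) + 2 ^ ((m + 1) / 2) - 2 := by
  induction m with
  | zero => simp
  | succ m ih =>
    rw [Finset.sum_range_succ, ih]
    have ha : 1 ≤ 2 ^ (m / 2) := Nat.one_le_two_pow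
    have hb : 1 ≤ 2 ^ ((m + 1) / 2) := Nat.one_le_two_pow
    have h2 : 2 ^ ((m + 1 + 1) / 2) = 2 * 2 ^ (m / 2) := by
      rw [show (m + 1 + 1) / 2 = m / 2 + 1 by omega]; ring
    omega

set_option maxHeartbeats 1000000

/-- Lemma 3 of the paper with an explicit constant: the total number of items in
    the sorted sequences of a soft sequence heap with error parameter `ε` and
    rank threshold `r0 = ⌈log₂ (1/ε)⌉` after `N` insertions is at most
    `32 * √(N / ε)`. -/
theorem soft_sequence_heap_total_size (N : ℕ) (hN : 1 ≤ N) (ε : ℝ)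
    (hε0 : 0 < ε) (hε1 : ε < 1) (r0 : ℕ)
    (hr0 : r0 = ⌈Real.logb 2 (1 / ε)⌉₊)
    (S : ℕ → ℕ)
    (hSlow : ∀ r, r ≤ r0 → S r = 2 ^ r)
    (hShigh : ∀ r, r0 < r → S r = (2 ^ r0 + 1) * 2 ^ ((r - r0 + 1) / 2)) :
    ((∑ r ∈ Finset.range (Nat.log 2 N + 1), S r : ℕ) : ℝ)
      ≤ 32 * Real.sqrt ((N : ℝ) / ε) := by
  have hε0' : (0:ℝ) < 1 / ε := by positivity
  set L := Nat.log 2 N with hL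
  have hNpos : (0:ℝ) < N := by exact_mod_cast hN
  have h2L : (2:ℝ) ^ L ≤ N := by exact_mod_cast Nat.pow_log_le_self 2 (by omega)
  have h2L' : (N:ℝ) < 2 ^ (L + 1) := by
    exact_mod_cast Nat.lt_pow_succ_log_self (by norm_num) N
  have hinv1 : 1 < 1 / ε := by rw [lt_div_iff₀ hε0]; linarith
  have hlogpos : 0 < Real.logb 2 (1 / ε) := Real.logb_pos one_lt_two hinv1
  have hA1 : 1 / ε ≤ (2:ℝ) ^ r0 := by
    have h1 : Real.logb 2 (1 / ε) ≤ (r0:ℝ) := by rw [hr0]; exact Nat.le_ceil _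
    calc 1 / ε = (2:ℝ) ^ Real.logb 2 (1 / ε) :=
          (Real.rpow_logb two_pos (by norm_num) hε0').symm
      _ ≤ (2:ℝ) ^ (r0:ℝ) := (Real.rpow_le_rpow_left_iff one_lt_two).mpr h1
      _ = (2:ℝ) ^ r0 := Real.rpow_natCast 2 r0
  have hA2 : (2:ℝ) ^ r0 ≤ 2 / ε := by
    have h1 : (r0:ℝ) ≤ Real.logb 2 (1 / ε) + 1 := by
      rw [hr0]; exact le_of_lt (Nat.ceil_lt_add_one hlogpos.le)
    calc (2:ℝ) ^ r0 = (2:ℝ) ^ (r0:ℝ) := (Real.rpow_natCast 2 r0).symm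
      _ ≤ (2:ℝ) ^ (Real.logb 2 (1 / ε) + 1) :=
          (Real.rpow_le_rpow_left_iff one_lt_two).mpr h1
      _ = (1 / ε) * 2 := by
          rw [Real.rpow_add two_pos, Real.rpow_logb two_pos (by norm_num) hε0',
            Real.rpow_one]
      _ = 2 / ε := by ring
  rcases le_or_gt L r0 with hcase | hcase
  · -- all ranks are at most r0
    have hsum : ∑ r ∈ Finset.range (L + 1), S r = 2 ^ (L + 1) - 1 := by
      rw [Finset.sum_congr rfl fun r hr => hSlow r (by
        simp only [Finset.mem_range] at hr; omega)]
      exact geom2 (L + 1)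
    have hcast : ((∑ r ∈ Finset.range (L + 1), S r : ℕ) : ℝ) ≤ 2 * N := by
      rw [hsum]
      have h1 : ((2 ^ (L + 1) - 1 : ℕ) : ℝ) ≤ ((2 ^ (L + 1) : ℕ) : ℝ) := by
        exact_mod_cast Nat.sub_le _ _
      have h2 : ((2 ^ (L + 1) : ℕ) : ℝ) = 2 * 2 ^ L := by push_cast; ring
      linarith
    have hNe : (N:ℝ) * ε ≤ 4 := by
      have h3 : (2:ℝ) ^ (L + 1) ≤ 2 ^ (r0 + 1) :=
        pow_le_pow_right₀ one_le_two (by omega)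
      have h4 : (2:ℝ) ^ (r0 + 1) = 2 * 2 ^ r0 := by ring
      have h5 : (N:ℝ) ≤ 4 / ε := by
        have h10 : 2 * (2 / ε) = 4 / ε := by ring
        linarith
      calc (N:ℝ) * ε ≤ (4 / ε) * ε := by nlinarith
        _ = 4 := by field_simp
    have hsq : (N:ℝ) / 16 ≤ Real.sqrt ((N:ℝ) / ε) := by
      rw [Real.le_sqrt (by positivity) (by positivity), le_div_iff₀ hε0]
      nlinarith
    linarith
  · -- r0 < L
    set m := L - r0 with hm
    have hLm : L = r0 + m := by omega
    have hrange : L + 1 - (r0 + 1) = m := by omega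
    have hsplit : ∑ r ∈ Finset.range (L + 1), S r
        = ∑ r ∈ Finset.range (r0 + 1), S r + ∑ j ∈ Finset.range m, S (r0 + 1 + j) := by
      rw [Finset.range_eq_Ico,
        ← Finset.sum_Ico_consecutive S (by omega : 0 ≤ r0 + 1) (by omega : r0 + 1 ≤ L + 1),
        ← Finset.range_eq_Ico, Finset.sum_Ico_eq_sum_range, hrange]
    have h1 : ∑ r ∈ Finset.range (r0 + 1), S r = 2 ^ (r0 + 1) - 1 := by
      rw [Finset.sum_congr rfl fun r hr => hSlow r (by
        simp only [Finset.mem_range] at hr; omega)]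
      exact geom2 (r0 + 1)
    have h2 : ∑ j ∈ Finset.range m, S (r0 + 1 + j)
        = (2 ^ r0 + 1) * 2 * (2 ^ (m / 2) + 2 ^ ((m + 1) / 2) - 2) := by
      have hterm : ∀ j ∈ Finset.range m,
          S (r0 + 1 + j) = (2 ^ r0 + 1) * 2 * 2 ^ (j / 2) := by
        intro j _
        rw [hShigh _ (by omega), show (r0 + 1 + j - r0 + 1) / 2 = j / 2 + 1 by omega,
          pow_succ]
        ring
      rw [Finset.sum_congr rfl hterm, ← Finset.mul_sum, halfsum]
    have hT : ∑ r ∈ Finset.range (L + 1), S r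
        ≤ 2 ^ (r0 + 1) + (2 ^ r0 + 1) * 4 * 2 ^ ((m + 1) / 2) := by
      rw [hsplit, h1, h2]
      have hmm : 2 ^ (m / 2) ≤ 2 ^ ((m + 1) / 2) :=
        Nat.pow_le_pow_right (by norm_num) (by omega)
      have hstep : (2 ^ r0 + 1) * 2 * (2 ^ (m / 2) + 2 ^ ((m + 1) / 2) - 2)
          ≤ (2 ^ r0 + 1) * 2 * (2 * 2 ^ ((m + 1) / 2)) :=
        Nat.mul_le_mul_left _ (by omega)
      have heq : (2 ^ r0 + 1) * 2 * (2 * 2 ^ ((m + 1) / 2))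
          = (2 ^ r0 + 1) * 4 * 2 ^ ((m + 1) / 2) := by ring
      have hfin := Nat.add_le_add (Nat.sub_le (2 ^ (r0 + 1)) 1) hstep
      rw [heq] at hfin
      exact hfin
    have hcast : ((∑ r ∈ Finset.range (L + 1), S r : ℕ) : ℝ)
        ≤ 2 * 2 ^ r0 + ((2:ℝ) ^ r0 + 1) * 4 * 2 ^ ((m + 1) / 2) := by
      have := hT
      have h' : ((∑ r ∈ Finset.range (L + 1), S r : ℕ) : ℝ)
          ≤ ((2 ^ (r0 + 1) + (2 ^ r0 + 1) * 4 * 2 ^ ((m + 1) / 2) : ℕ) : ℝ) := by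
        exact_mod_cast this
      calc ((∑ r ∈ Finset.range (L + 1), S r : ℕ) : ℝ)
          ≤ ((2 ^ (r0 + 1) + (2 ^ r0 + 1) * 4 * 2 ^ ((m + 1) / 2) : ℕ) : ℝ) := h'
        _ = 2 * 2 ^ r0 + ((2:ℝ) ^ r0 + 1) * 4 * 2 ^ ((m + 1) / 2) := by
            push_cast; ring
    set s := Real.sqrt ((N:ℝ) / ε) with hs
    have hs0 : 0 ≤ s := Real.sqrt_nonneg _
    -- 1/ε ≤ N
    have hεN : 1 / ε ≤ (N:ℝ) := by
      have h2r : (2:ℝ) ^ r0 ≤ 2 ^ L := pow_le_pow_right₀ one_le_two (by omega)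
      linarith
    -- 1/ε ≤ s
    have hεs : 1 / ε ≤ s := by
      rw [hs, Real.le_sqrt (by positivity) (by positivity)]
      calc (1 / ε) ^ 2 = (1 / ε) * (1 / ε) := pow_two _
        _ ≤ (N:ℝ) * (1 / ε) := mul_le_mul_of_nonneg_right hεN hε0'.le
        _ = (N:ℝ) / ε := by ring
    -- 2^m ≤ N * ε
    have h2m : (2:ℝ) ^ m ≤ N * ε := by
      have hpow : (2:ℝ) ^ r0 * 2 ^ m = 2 ^ L := by
        rw [hLm, pow_add]
      have h6 : (1 / ε) * 2 ^ m ≤ (2:ℝ) ^ r0 * 2 ^ m := by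
        apply mul_le_mul_of_nonneg_right hA1 (by positivity)
      have h7 : (1 / ε) * 2 ^ m ≤ N := by
        rw [hpow] at h6; linarith
      have h9 := mul_le_mul_of_nonneg_right h7 hε0.le
      have h10 : (1 / ε * 2 ^ m) * ε = 2 ^ m := by field_simp
      linarith
    -- sqrt(N ε) = s * ε
    have hkey : Real.sqrt ((N:ℝ) * ε) = s * ε := by
      have heq : (N:ℝ) * ε = ((N:ℝ) / ε) * ε ^ 2 := by field_simp
      rw [heq, Real.sqrt_mul (by positivity), Real.sqrt_sq hε0.le, hs]
    -- B bound
    have hsqrt2 : Real.sqrt 2 ≤ 1.5 := by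
      nlinarith [Real.sq_sqrt (by norm_num : (0:ℝ) ≤ 2), Real.sqrt_nonneg 2,
        sq_nonneg (Real.sqrt 2 - 1.5)]
    have hB : (2:ℝ) ^ ((m + 1) / 2) ≤ 1.5 * (s * ε) := by
      have hBsq : ((2:ℝ) ^ ((m + 1) / 2)) ^ 2 ≤ 2 * 2 ^ m := by
        rw [← pow_mul]
        calc (2:ℝ) ^ ((m + 1) / 2 * 2) ≤ 2 ^ (m + 1) :=
            pow_le_pow_right₀ one_le_two (by omega)
          _ = 2 * 2 ^ m := by ring
      have hB1 : (2:ℝ) ^ ((m + 1) / 2) ≤ Real.sqrt (2 * 2 ^ m) := by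
        rw [Real.le_sqrt (by positivity) (by positivity)]
        exact hBsq
      have hB2 : Real.sqrt (2 * 2 ^ m) = Real.sqrt 2 * Real.sqrt ((2:ℝ) ^ m) :=
        Real.sqrt_mul (by norm_num) _
      have hB3 : Real.sqrt ((2:ℝ) ^ m) ≤ Real.sqrt ((N:ℝ) * ε) :=
        Real.sqrt_le_sqrt h2m
      have hB4 : Real.sqrt 2 * Real.sqrt ((2:ℝ) ^ m) ≤ 1.5 * (s * ε) := by
        rw [hkey] at hB3
        have := mul_le_mul hsqrt2 hB3 (Real.sqrt_nonneg _) (by norm_num)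
        linarith
      linarith
    have hA0 : (1:ℝ) ≤ (2:ℝ) ^ r0 := by
      exact_mod_cast Nat.one_le_two_pow (n := r0)
    have hB0 : (0:ℝ) ≤ (2:ℝ) ^ ((m + 1) / 2) := by positivity
    have hdiv : (4:ℝ) / ε = 4 * (1 / ε) := by ring
    have hfirst : 2 * (2:ℝ) ^ r0 ≤ 4 * s := by
      have h9 : 2 * (2:ℝ) ^ r0 ≤ 4 * (1 / ε) := by
        have h10 : (2:ℝ) / ε = 2 * (1 / ε) := by ring
        linarith
      linarith
    have hsecond : ((2:ℝ) ^ r0 + 1) * 4 * 2 ^ ((m + 1) / 2) ≤ 24 * s := by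
      have hc1 : ((2:ℝ) ^ r0 + 1) * 4 ≤ 16 * (1 / ε) := by
        have h10 : (2:ℝ) / ε = 2 * (1 / ε) := by ring
        nlinarith [hinv1, hA0, hA2]
      have hmul := mul_le_mul hc1 hB hB0 (by positivity)
      calc ((2:ℝ) ^ r0 + 1) * 4 * 2 ^ ((m + 1) / 2)
          ≤ 16 * (1 / ε) * (1.5 * (s * ε)) := hmul
        _ = 24 * s := by field_simp; ring
    calc ((∑ r ∈ Finset.range (L + 1), S r : ℕ) : ℝ)
        ≤ 2 * 2 ^ r0 + ((2:ℝ) ^ r0 + 1) * 4 * 2 ^ ((m + 1) / 2) := hcast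
      _ ≤ 4 * s + 24 * s := by linarith
      _ ≤ 32 * s := by linarith
end

section
/- Let N ≥ 1 and r0 be natural numbers. Define S : ℕ → ℕ by S(r) = 2^r for r ≤ r0 and S(r) = (2^{r0} + 1)·2^{⌈(r−r0)/2⌉} for r > r0. Then ∑_{r=0}^{⌊log₂ N⌋} ⌊N/2^r⌋·S(r) ≤ N·(r0 + 7). -/
private lemma geom_half (m : ℕ) : ∀ N : ℕ, ∑ j ∈ Finset.range m, N / 2 ^ j ≤ 2 * N := by
  induction m with
  | zero => intro N; simp
  | succ m ih =>
    intro N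
    rw [Finset.sum_range_succ']
    have h1 : ∀ i, N / 2 ^ (i + 1) = N / 2 / 2 ^ i := by
      intro i
      rw [Nat.div_div_eq_div_mul, pow_succ']
    simp only [h1, pow_zero, Nat.div_one]
    have := ih (N / 2)
    omega

private lemma pair_sum (h : ℕ → ℕ) (m : ℕ) :
    ∑ i ∈ Finset.range (2 * m), h (i / 2) = 2 * ∑ j ∈ Finset.range m, h j := by
  induction m with
  | zero => simp
  | succ m ih =>
    have : 2 * (m + 1) = (2 * m) + 1 + 1 := by ring
    rw [this, Finset.sum_range_succ, Finset.sum_range_succ, ih, Finset.sum_range_succ]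
    have e1 : (2 * m) / 2 = m := by omega
    have e2 : (2 * m + 1) / 2 = m := by omega
    rw [e1, e2]; ring

private lemma high_sum (N M : ℕ) :
    ∑ i ∈ Finset.range M, (2 * N) / 2 ^ ((i + 1) / 2) ≤ 6 * N := by
  have hsub : ∑ i ∈ Finset.range M, (2 * N) / 2 ^ ((i + 1) / 2)
      ≤ ∑ i ∈ Finset.range (2 * M + 1), (2 * N) / 2 ^ ((i + 1) / 2) := by
    apply Finset.sum_le_sum_of_subset
    apply Finset.range_subset_range.2; omega
  have hshift : ∀ i : ℕ, (2 * N) / 2 ^ ((i + 1 + 1) / 2) = N / 2 ^ (i / 2) := by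
    intro i
    have e : (i + 1 + 1) / 2 = i / 2 + 1 := by omega
    rw [e, pow_succ', Nat.mul_div_mul_left _ _ (by norm_num)]
  calc ∑ i ∈ Finset.range M, (2 * N) / 2 ^ ((i + 1) / 2)
      ≤ ∑ i ∈ Finset.range (2 * M + 1), (2 * N) / 2 ^ ((i + 1) / 2) := hsub
    _ = (2 * N) / 2 ^ ((0 + 1) / 2)
        + ∑ i ∈ Finset.range (2 * M), (2 * N) / 2 ^ ((i + 1 + 1) / 2) := by
        rw [Finset.sum_range_succ']; ring
    _ = 2 * N + ∑ i ∈ Finset.range (2 * M), N / 2 ^ (i / 2) := by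
        simp only [hshift]; norm_num
    _ = 2 * N + 2 * ∑ j ∈ Finset.range M, N / 2 ^ j := by
        rw [pair_sum (fun j => N / 2 ^ j) M]
    _ ≤ 2 * N + 2 * (2 * N) := by
        have := geom_half M N; omega
    _ = 6 * N := by ring

/-- Lemma 4 of the paper with an explicit constant: the total length of all
    sequences ever created by `N` insertions into a soft sequence heap with
    rank threshold `r0` is at most `N * (r0 + 7)`. -/
theorem soft_sequence_heap_total_created (N r0 : ℕ) (hN : 1 ≤ N)
    (S : ℕ → ℕ)
    (hSlow : ∀ r, r ≤ r0 → S r = 2 ^ r)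
    (hShigh : ∀ r, r0 < r → S r = (2 ^ r0 + 1) * 2 ^ ((r - r0 + 1) / 2)) :
    ∑ r ∈ Finset.range (Nat.log 2 N + 1), N / 2 ^ r * S r ≤ N * (r0 + 7) := by
  set L := Nat.log 2 N with hL
  have hlow : ∀ r, r ≤ r0 → N / 2 ^ r * S r ≤ N := by
    intro r hr
    rw [hSlow r hr]
    exact Nat.div_mul_le_self N (2 ^ r)
  by_cases hcase : L ≤ r0
  · calc ∑ r ∈ Finset.range (L + 1), N / 2 ^ r * S r
        ≤ ∑ _r ∈ Finset.range (L + 1), N := by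
          apply Finset.sum_le_sum
          intro r hr
          exact hlow r (by simp at hr; omega)
      _ = (L + 1) * N := by simp [mul_comm]
      _ ≤ N * (r0 + 7) := by nlinarith
  · push_neg at hcase
    have key : ∀ i : ℕ, N / 2 ^ (r0 + 1 + i) * S (r0 + 1 + i) ≤ 2 * N / 2 ^ ((i + 1) / 2) := by
      intro i
      rw [hShigh _ (by omega)]
      have e1 : r0 + 1 + i - r0 + 1 = i + 2 := by omega
      have e2 : (i + 2) / 2 = i / 2 + 1 := by omega
      rw [e1, e2]
      set D := 2 ^ (r0 + 1 + i) with hD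
      have hD0 : 0 < D := pow_pos two_pos _
      have step1 : N / D * ((2 ^ r0 + 1) * 2 ^ (i / 2 + 1))
          ≤ N * ((2 ^ r0 + 1) * 2 ^ (i / 2 + 1)) / D := by
        rw [Nat.le_div_iff_mul_le hD0]
        calc N / D * ((2 ^ r0 + 1) * 2 ^ (i / 2 + 1)) * D
            = N / D * D * ((2 ^ r0 + 1) * 2 ^ (i / 2 + 1)) := by ring
          _ ≤ N * ((2 ^ r0 + 1) * 2 ^ (i / 2 + 1)) :=
              Nat.mul_le_mul_right _ (Nat.div_mul_le_self N D)
      have step2 : N * ((2 ^ r0 + 1) * 2 ^ (i / 2 + 1)) ≤ 2 ^ (r0 + i / 2 + 1) * (2 * N) := by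
        have h1 : (2 : ℕ) ^ r0 + 1 ≤ 2 ^ (r0 + 1) := by
          have := Nat.one_le_two_pow (n := r0)
          rw [pow_succ]; omega
        have h2 : (2 : ℕ) ^ (r0 + 1) * 2 ^ (i / 2 + 1) = 2 ^ (r0 + i / 2 + 1) * 2 := by
          rw [← pow_add, ← pow_succ]; congr 1; omega
        calc N * ((2 ^ r0 + 1) * 2 ^ (i / 2 + 1))
            ≤ N * (2 ^ (r0 + 1) * 2 ^ (i / 2 + 1)) := by
              apply Nat.mul_le_mul_left
              exact Nat.mul_le_mul_right _ h1
          _ = 2 ^ (r0 + i / 2 + 1) * (2 * N) := by rw [h2]; ring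
      have step3 : 2 ^ (r0 + i / 2 + 1) * (2 * N) / D = 2 * N / 2 ^ ((i + 1) / 2) := by
        have hDeq : D = 2 ^ (r0 + i / 2 + 1) * 2 ^ ((i + 1) / 2) := by
          rw [hD, ← pow_add]; congr 1; omega
        rw [hDeq, Nat.mul_div_mul_left _ _ (pow_pos two_pos _)]
      calc N / D * ((2 ^ r0 + 1) * 2 ^ (i / 2 + 1))
          ≤ N * ((2 ^ r0 + 1) * 2 ^ (i / 2 + 1)) / D := step1
        _ ≤ 2 ^ (r0 + i / 2 + 1) * (2 * N) / D := Nat.div_le_div_right step2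
        _ = 2 * N / 2 ^ ((i + 1) / 2) := step3
    have hsplit : L + 1 = (r0 + 1) + (L - r0) := by omega
    rw [hsplit, Finset.sum_range_add]
    have part1 : ∑ r ∈ Finset.range (r0 + 1), N / 2 ^ r * S r ≤ (r0 + 1) * N := by
      calc ∑ r ∈ Finset.range (r0 + 1), N / 2 ^ r * S r
          ≤ ∑ _r ∈ Finset.range (r0 + 1), N := by
            apply Finset.sum_le_sum
            intro r hr
            exact hlow r (by simp at hr; omega)
        _ = (r0 + 1) * N := by simp [mul_comm]
    have part2 : ∑ i ∈ Finset.range (L - r0), N / 2 ^ (r0 + 1 + i) * S (r0 + 1 + i) ≤ 6 * N := by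
      calc ∑ i ∈ Finset.range (L - r0), N / 2 ^ (r0 + 1 + i) * S (r0 + 1 + i)
          ≤ ∑ i ∈ Finset.range (L - r0), 2 * N / 2 ^ ((i + 1) / 2) :=
            Finset.sum_le_sum fun i _ => key i
        _ ≤ 6 * N := high_sum N (L - r0)
    have : N * (r0 + 7) = (r0 + 1) * N + 6 * N := by ring
    omega
end

section
/- Let N ≥ 1 and r0 be natural numbers. Define S : ℕ → ℕ by S(r) = 2^r for r ≤ r0 and S(r) = (2^{r0} + 1)·2^{⌈(r−r0)/2⌉} for r > r0. Then ∑_{r=r0+1}^{⌊log₂ N⌋} ⌊N/2^r⌋·S(r)·r ≤ 6·N·r0 + 20·N. -/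
lemma ssh_aux (r0 : ℕ) : ∀ j : ℕ,
    (∑ k ∈ Finset.Icc 1 (2*j), (r0 + k) * 2 ^ (j - k/2)) + (3*r0 + 6*j + 10)
      = (3*r0 + 10) * 2 ^ j := by
  intro j
  induction j with
  | zero => simp
  | succ j ih =>
    have h2 : 2*(j+1) = (2*j+1) + 1 := by ring
    rw [h2, Finset.sum_Icc_succ_top (by omega), show 2*j+1 = 2*j + 1 from rfl,
      Finset.sum_Icc_succ_top (by omega)]
    have hcong : ∑ k ∈ Finset.Icc 1 (2*j), (r0 + k) * 2 ^ (j+1 - k/2)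
        = 2 * ∑ k ∈ Finset.Icc 1 (2*j), (r0 + k) * 2 ^ (j - k/2) := by
      rw [Finset.mul_sum]
      refine Finset.sum_congr rfl fun k hk => ?_
      simp only [Finset.mem_Icc] at hk
      have : k/2 ≤ j := by omega
      have : j + 1 - k/2 = (j - k/2) + 1 := by omega
      rw [this, pow_succ]; ring
    have e1 : j + 1 - (2*j+1)/2 = 1 := by omega
    have e2 : j + 1 - ((2*j+1)+1)/2 = 0 := by omega
    rw [hcong, e1, e2]
    have := ih
    ring_nf
    ring_nf at this
    omega

lemma ssh_aux2 (r0 m : ℕ) :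
    (∑ k ∈ Finset.Icc 1 m, (r0 + k) * 2 ^ ((m+1)/2 - k/2))
      ≤ (3*r0 + 10) * 2 ^ ((m+1)/2) := by
  set J := (m+1)/2 with hJ
  have hsub : Finset.Icc 1 m ⊆ Finset.Icc 1 (2*J) := by
    apply Finset.Icc_subset_Icc le_rfl; omega
  calc (∑ k ∈ Finset.Icc 1 m, (r0 + k) * 2 ^ (J - k/2))
      ≤ ∑ k ∈ Finset.Icc 1 (2*J), (r0 + k) * 2 ^ (J - k/2) :=
        Finset.sum_le_sum_of_subset hsub
    _ ≤ (3*r0 + 10) * 2 ^ J := by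
        have := ssh_aux r0 J; omega

lemma ssh_real (t a b c R Nr : ℝ) (ht : 1 ≤ t) (ha : 0 < a) (hb : 0 < b)
    (hc : 0 < c) (hR : 0 ≤ R) (hNr : 0 ≤ Nr) :
    Nr / (t*a*b) * ((t+1)*b) * R ≤ 2*Nr*(R*c) / (a*c) := by
  rw [div_mul_eq_mul_div, div_mul_eq_mul_div,
    div_le_div_iff₀ (by positivity) (by positivity)]
  have key : 0 ≤ Nr*R*a*b*c := by positivity
  nlinarith [key, mul_le_mul_of_nonneg_left ht key]

/-- From the proof of Lemma 5 of the paper: the total cost of suffix-min updates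
    for extract-min operations on sequences of rank above the threshold `r0` is
    at most `6 * N * r0 + 20 * N`. -/
theorem soft_sequence_heap_extract_min_cost (N r0 : ℕ) (hN : 1 ≤ N)
    (S : ℕ → ℕ)
    (hSlow : ∀ r, r ≤ r0 → S r = 2 ^ r)
    (hShigh : ∀ r, r0 < r → S r = (2 ^ r0 + 1) * 2 ^ ((r - r0 + 1) / 2)) :
    ∑ r ∈ Finset.Icc (r0 + 1) (Nat.log 2 N), N / 2 ^ r * S r * r
      ≤ 6 * N * r0 + 20 * N := by
  set n := Nat.log 2 N with hn
  by_cases hnr : n ≤ r0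
  · have he : Finset.Icc (r0 + 1) n = ∅ := by
      rw [Finset.Icc_eq_empty]; omega
    rw [he, Finset.sum_empty]
    positivity
  push_neg at hnr
  set m := n - r0 with hm
  set J := (m+1)/2 with hJ
  have hIcc : Finset.Icc (r0 + 1) n
      = Finset.map (addLeftEmbedding r0) (Finset.Icc 1 m) := by
    rw [Finset.map_add_left_Icc]
    congr 1
    omega
  rw [hIcc, Finset.sum_map]
  simp only [addLeftEmbedding_apply]
  -- cast to ℝ
  rw [← Nat.cast_le (α := ℝ), Nat.cast_sum]
  have hterm : ∀ k ∈ Finset.Icc 1 m,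
      ((N / 2 ^ (r0 + k) * S (r0 + k) * (r0 + k) : ℕ) : ℝ)
        ≤ 2 * N * (((r0 + k) * 2 ^ (J - k/2) : ℕ) : ℝ) / 2 ^ J := by
    intro k hk
    simp only [Finset.mem_Icc] at hk
    obtain ⟨hk1, hkm⟩ := hk
    have hS : S (r0 + k) = (2 ^ r0 + 1) * 2 ^ ((k + 1) / 2) := by
      rw [hShigh (r0 + k) (by omega)]
      congr 2
      omega
    have hd : ((N / 2 ^ (r0 + k) : ℕ) : ℝ) ≤ (N : ℝ) / 2 ^ (r0 + k) := by
      have := (Nat.cast_div_le :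
        ((N / 2 ^ (r0 + k) : ℕ) : ℝ) ≤ ((N : ℕ) : ℝ) / ((2 ^ (r0 + k) : ℕ) : ℝ))
      push_cast at this
      exact this
    have e1 : (2:ℝ) ^ (r0 + k) = 2 ^ r0 * 2 ^ (k/2) * 2 ^ ((k+1)/2) := by
      rw [← pow_add, ← pow_add]
      congr 1
      omega
    have e2 : (2:ℝ) ^ J = 2 ^ (k/2) * 2 ^ (J - k/2) := by
      rw [← pow_add]
      congr 1
      omega
    have hstep1 :
        ((N / 2 ^ (r0 + k) * S (r0 + k) * (r0 + k) : ℕ) : ℝ)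
          ≤ ((N : ℝ) / 2 ^ (r0 + k)) * (((2:ℝ) ^ r0 + 1) * 2 ^ ((k + 1) / 2)) * ((r0 : ℝ) + k) := by
      push_cast
      apply mul_le_mul_of_nonneg_right _ (by positivity)
      apply mul_le_mul hd _ (by positivity) (by positivity)
      rw [hS]; push_cast; exact le_rfl
    refine hstep1.trans ?_
    have hreal := ssh_real (2^r0) (2^(k/2)) (2^((k+1)/2)) (2^(J - k/2))
      ((r0 : ℝ) + k) (N : ℝ) (by exact_mod_cast Nat.one_le_two_pow (n := r0))
      (by positivity) (by positivity) (by positivity) (by positivity) (by positivity)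
    rw [e1, e2]
    push_cast
    exact hreal
  calc ∑ k ∈ Finset.Icc 1 m, ((N / 2 ^ (r0 + k) * S (r0 + k) * (r0 + k) : ℕ) : ℝ)
      ≤ ∑ k ∈ Finset.Icc 1 m, 2 * N * (((r0 + k) * 2 ^ (J - k/2) : ℕ) : ℝ) / 2 ^ J :=
        Finset.sum_le_sum hterm
    _ = 2 * N * (((∑ k ∈ Finset.Icc 1 m, (r0 + k) * 2 ^ (J - k/2) : ℕ)) : ℝ) / 2 ^ J := by
        rw [← Finset.sum_div, ← Finset.mul_sum, Nat.cast_sum]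
    _ ≤ 2 * N * (((3*r0 + 10) * 2 ^ J : ℕ) : ℝ) / 2 ^ J := by
        gcongr
        exact_mod_cast ssh_aux2 r0 m
    _ = ((6 * N * r0 + 20 * N : ℕ) : ℝ) := by
        push_cast
        have : (2:ℝ) ^ J ≠ 0 := by positivity
        field_simp
        ring
end

section
/- Let r0 be a natural number and let d : ℕ → ℕ satisfy d(r) = 0 for all r ≤ r0, d(r) = 2·d(r−1) for r > r0 with r − r0 odd, and d(r) = 2·d(r−1) + 2^{⌊(r−1−r0)/2⌋} for r > r0 with r − r0 even. Then d(r) = 2^{r−r0−1} − 2^{⌈(r−r0)/2⌉−1} for all r > r0; in particular d(r) ≤ 2^{r−r0−1} for all r > r0. -/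
/-- Lemma 7 of the paper: the bound `d` on the number of corrupted items in a
    rank-`r` sequence of a soft sequence heap with rank threshold `r0`
    satisfies `d r = 2 ^ (r - r0 - 1) - 2 ^ (⌈(r - r0) / 2⌉ - 1)` for `r > r0`;
    in particular `d r ≤ 2 ^ (r - r0 - 1)` for `r > r0`. -/
theorem soft_sequence_heap_corrupted_count (r0 : ℕ) (d : ℕ → ℕ)
    (hlow : ∀ r, r ≤ r0 → d r = 0)
    (hodd : ∀ r, r0 < r → Odd (r - r0) → d r = 2 * d (r - 1))
    (heven : ∀ r, r0 < r → Even (r - r0) →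
      d r = 2 * d (r - 1) + 2 ^ ((r - 1 - r0) / 2)) :
    (∀ r, r0 < r → d r = 2 ^ (r - r0 - 1) - 2 ^ ((r - r0 + 1) / 2 - 1)) ∧
    (∀ r, r0 < r → d r ≤ 2 ^ (r - r0 - 1)) := by
  have key : ∀ k, 1 ≤ k → d (r0 + k) = 2 ^ (k - 1) - 2 ^ ((k + 1) / 2 - 1) := by
    intro k hk
    induction k, hk using Nat.le_induction with
    | base =>
      have h := hodd (r0 + 1) (by omega) (by
        have : r0 + 1 - r0 = 1 := by omega
        rw [this]; exact odd_one)
      have h1 : r0 + 1 - 1 = r0 := by omega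
      rw [h1, hlow r0 le_rfl] at h
      simpa using h
    | succ k hk ih =>
      have hlt : r0 < r0 + (k + 1) := by omega
      have hsub : r0 + (k + 1) - r0 = k + 1 := by omega
      have hsub1 : r0 + (k + 1) - 1 = r0 + k := by omega
      rcases Nat.even_or_odd (k + 1) with he | ho
      · -- k + 1 = 2 * m, m ≥ 1
        obtain ⟨m, hm⟩ := he
        have hm1 : 1 ≤ m := by omega
        have h := heven (r0 + (k + 1)) hlt (by rw [hsub]; exact ⟨m, hm⟩)
        rw [hsub1, ih] at h
        have e0 : (r0 + k - r0) / 2 = m - 1 := by omega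
        have ek : k - 1 = 2 * m - 2 := by omega
        have ek2 : (k + 1) / 2 - 1 = m - 1 := by omega
        rw [e0, ek, ek2] at h
        have et1 : k + 1 - 1 = 2 * m - 1 := by omega
        have et2 : (k + 1 + 1) / 2 - 1 = m - 1 := by omega
        rw [et1, et2]
        have p1 : 2 ^ (2 * m - 1) = 2 * 2 ^ (2 * m - 2) := by
          rw [← pow_succ']
          congr 1
          omega
        have p2 : 2 ^ m = 2 * 2 ^ (m - 1) := by
          rw [← pow_succ']
          congr 1
          omega
        have hle : 2 ^ (m - 1) ≤ 2 ^ (2 * m - 2) :=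
          Nat.pow_le_pow_right (by norm_num) (by omega)
        rw [h, Nat.mul_sub, p1]
        omega
      · -- k + 1 odd, k = 2 * m, m ≥ 1
        obtain ⟨m, hm⟩ := ho
        have hm1 : 1 ≤ m := by omega
        have h := hodd (r0 + (k + 1)) hlt (by rw [hsub]; exact ⟨m, hm⟩)
        rw [hsub1, ih] at h
        have ek : k - 1 = 2 * m - 1 := by omega
        have ek2 : (k + 1) / 2 - 1 = m - 1 := by omega
        rw [ek, ek2] at h
        have et1 : k + 1 - 1 = 2 * m := by omega
        have et2 : (k + 1 + 1) / 2 - 1 = m := by omega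
        rw [et1, et2]
        have p1 : 2 ^ (2 * m) = 2 * 2 ^ (2 * m - 1) := by
          rw [← pow_succ']
          congr 1
          omega
        have p2 : 2 ^ m = 2 * 2 ^ (m - 1) := by
          rw [← pow_succ']
          congr 1
          omega
        rw [h, Nat.mul_sub, p1, p2]
  have main : ∀ r, r0 < r → d r = 2 ^ (r - r0 - 1) - 2 ^ ((r - r0 + 1) / 2 - 1) := by
    intro r hr
    have hr' : r = r0 + (r - r0) := by omega
    rw [hr', key (r - r0) (by omega)]
    congr 2 <;> omega
  exact ⟨main, fun r hr => by rw [main r hr]; exact Nat.sub_le _ _⟩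
end

section
/- Let N ≥ 1 be a natural number, let ε be a real number with 0 < ε ≤ 1, and let r0 = max(2, ⌈log₂(1/ε)⌉). Then ∑_{r=r0+1}^{⌊log₃ N⌋} ⌊N/3^r⌋·(2^{r−r0} − 1) ≤ ε·N. -/
lemma two_mul_two_pow_le (n : ℕ) (hn : 2 ≤ n) : 2 * 2 ^ n ≤ 3 ^ n := by
  induction n with
  | zero => omega
  | succ k ih =>
    rcases Nat.lt_or_ge k 2 with hk | hk
    · interval_cases k <;> simp_all
    · have := ih hk
      calc 2 * 2 ^ (k+1) = 2 * (2 * 2^k) := by ring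
        _ ≤ 3 * 3 ^ k := by nlinarith [pow_pos (by norm_num : 0 < 2) k]
        _ = 3 ^ (k+1) := by ring

/-- Section 4 of the paper: the total number of corruptions in the
    ternary-tree-based soft heap after `N` insertions, with rank threshold
    `r0 = max 2 ⌈log₂ (1/ε)⌉`, is at most `ε * N`. -/
theorem ternary_soft_heap_total_corruptions (N : ℕ) (hN : 1 ≤ N) (ε : ℝ)
    (hε0 : 0 < ε) (hε1 : ε ≤ 1) (r0 : ℕ)
    (hr0 : r0 = max 2 ⌈Real.logb 2 (1 / ε)⌉₊) :
    ((∑ r ∈ Finset.Icc (r0 + 1) (Nat.log 3 N),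
        N / 3 ^ r * (2 ^ (r - r0) - 1) : ℕ) : ℝ) ≤ ε * N := by
  have hNpos : (0:ℝ) < N := by exact_mod_cast hN
  -- key: 1/2^r0 ≤ ε
  have hr02 : 2 ≤ r0 := hr0 ▸ le_max_left _ _
  have hεpow : (1:ℝ) / 2 ^ r0 ≤ ε := by
    have h1 : Real.logb 2 (1/ε) ≤ (r0 : ℝ) := by
      have := Nat.le_ceil (Real.logb 2 (1/ε))
      have h2 : (⌈Real.logb 2 (1/ε)⌉₊ : ℝ) ≤ (r0 : ℝ) := by
        exact_mod_cast hr0 ▸ le_max_right 2 _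
      linarith
    have h3 : (1:ℝ)/ε ≤ 2 ^ r0 := by
      have := Real.rpow_le_rpow_of_exponent_le (by norm_num : (1:ℝ) ≤ 2) h1
      rwa [Real.rpow_logb (by norm_num) (by norm_num) (by positivity),
        Real.rpow_natCast] at this
    rw [div_le_iff₀ (by positivity)]
    have : 1 ≤ ε * (1/ε) := by rw [mul_one_div, div_self hε0.ne']
    nlinarith [pow_pos (by norm_num : (0:ℝ) < 2) r0]
  have h23 : (2:ℝ) / 3 ^ r0 ≤ 1 / 2 ^ r0 := by
    rw [div_le_div_iff₀ (by positivity) (by positivity)]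
    have := two_mul_two_pow_le r0 hr02
    have : (2:ℝ) * 2 ^ r0 ≤ 3 ^ r0 := by exact_mod_cast this
    linarith
  set L := Nat.log 3 N with hL
  rcases Nat.lt_or_ge L (r0 + 1) with hLr | hLr
  · rw [Finset.Icc_eq_empty (by omega)]
    simp; positivity
  -- termwise bound
  have hterm : ∀ r ∈ Finset.Icc (r0 + 1) L,
      ((N / 3 ^ r * (2 ^ (r - r0) - 1) : ℕ) : ℝ) ≤ (N:ℝ) / 2 ^ r0 * (2/3) ^ r := by
    intro r hr
    simp only [Finset.mem_Icc] at hr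
    push_cast
    have h1 : ((N / 3 ^ r : ℕ) : ℝ) ≤ (N:ℝ) / 3 ^ r := by
      have := Nat.cast_div_le (α := ℝ) (m := N) (n := 3 ^ r)
      simpa using this
    have h2 : ((2 ^ (r - r0) - 1 : ℕ) : ℝ) ≤ (2:ℝ) ^ (r - r0) := by
      push_cast [Nat.one_le_two_pow]
      simp
    have h3 : (2:ℝ) ^ (r - r0) = 2 ^ r / 2 ^ r0 := by
      rw [eq_div_iff (by positivity), ← pow_add]
      congr 1; omega
    calc ((N / 3 ^ r : ℕ) : ℝ) * ((2 ^ (r - r0) - 1 : ℕ) : ℝ)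
        ≤ ((N:ℝ) / 3 ^ r) * ((2:ℝ) ^ (r - r0)) := by
          apply mul_le_mul h1 h2 (by positivity) (by positivity)
      _ = (N:ℝ) / 2 ^ r0 * (2/3) ^ r := by
          rw [h3, div_pow]; ring
  rw [Nat.cast_sum]
  refine le_trans (Finset.sum_le_sum hterm) ?_
  rw [← Finset.mul_sum]
  -- geometric sum bound
  have hgeom : ∑ r ∈ Finset.Icc (r0 + 1) L, ((2:ℝ)/3) ^ r ≤ 2 * (2/3) ^ r0 := by
    have hIcc : Finset.Icc (r0 + 1) L = Finset.Ico (r0 + 1) (L + 1) := by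
      rw [Finset.Ico_add_one_right_eq_Icc]
    rw [hIcc, geom_sum_Ico (by norm_num) (by omega)]
    have hpow : (0:ℝ) < (2/3 : ℝ) ^ (L+1) := by positivity
    have : ((2:ℝ)/3) ^ (r0+1) = (2/3) * (2/3)^r0 := by ring
    rw [div_le_iff_of_neg (by norm_num : (2:ℝ)/3 - 1 < 0)]
    nlinarith [pow_pos (by norm_num : (0:ℝ) < 2/3) r0]
  calc (N:ℝ) / 2 ^ r0 * ∑ r ∈ Finset.Icc (r0 + 1) L, ((2:ℝ)/3) ^ r
      ≤ (N:ℝ) / 2 ^ r0 * (2 * (2/3) ^ r0) := by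
        apply mul_le_mul_of_nonneg_left hgeom (by positivity)
    _ = (N:ℝ) * (2 / 3 ^ r0) := by
        rw [div_pow]; field_simp
    _ ≤ (N:ℝ) * (1 / 2 ^ r0) := by nlinarith
    _ ≤ ε * N := by
        rw [mul_comm]
        exact mul_le_mul_of_nonneg_right hεpow hNpos.le
end
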